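/- If an n-vertex ℤ/3-flow-critical graph F ≠ K₂ satisfies: δ(F) ≥ 3, and the set S of its degree-3 vertices induces a forest, then |E(F)| ≥ (8n+1)/5. -/

import Mathlib

open Finset

/-- A multigraph with a fixed orientation of its edges: each edge has a
tail and a head. -/
structure MultiGraph where
  V : Type
  E : Type
  [fV : Fintype V]
  [fE : Fintype E]
  [dV : DecidableEq V]
  [dE : DecidableEq E]
  tail : E → V
  head : E → V

namespace MultiGraph

attribute [instance] fV fE dV dE

variable (G : MultiGraph)

/-- The incidence sign `[v,e]`: `1` if `e` is oriented towards `v`, `-1` if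
oriented away from `v`, `0` otherwise (so `0` on loops). -/
def sign (v : G.V) (e : G.E) : ℤ :=
  (if G.head e = v then 1 else 0) - (if G.tail e = v then 1 else 0)

/-- A flow with values in an abelian group: conservation at every vertex. -/
def IsFlow {A : Type*} [AddCommGroup A] (φ : G.E → A) : Prop :=
  ∀ v : G.V, ∑ e : G.E, G.sign v e • φ e = 0

/-- A nowhere-zero flow. -/
def IsNZFlow {A : Type*} [AddCommGroup A] (φ : G.E → A) : Prop :=
  G.IsFlow φ ∧ ∀ e : G.E, φ e ≠ 0

/-- `G` admits a nowhere-zero `A`-flow. -/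
def HasNZFlow (A : Type*) [AddCommGroup A] : Prop :=
  ∃ φ : G.E → A, G.IsNZFlow φ

/-- Two vertices are joined by an edge (in either direction). -/
def Adj (a b : G.V) : Prop :=
  ∃ e : G.E, (G.tail e = a ∧ G.head e = b) ∨ (G.tail e = b ∧ G.head e = a)

/-- `G` is connected. -/
def Connected : Prop :=
  Nonempty G.V ∧ ∀ a b : G.V, Relation.ReflTransGen G.Adj a b

/-- Contraction of a set of edges: the contracted edges are removed and
their endpoints identified. -/
noncomputable def contract (S : Set G.E) : MultiGraph := by
  classical
  exact
  { V := Quot (fun a b : G.V => ∃ e ∈ S, G.tail e = a ∧ G.head e = b)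
    E := {e : G.E // e ∉ S}
    fV := Fintype.ofSurjective (Quot.mk _) (Quot.mk_surjective)
    tail := fun e => Quot.mk _ (G.tail e.1)
    head := fun e => Quot.mk _ (G.head e.1) }

/-- `G` is `A`-flow-critical: `G` is connected, has no nowhere-zero `A`-flow,
but every single-edge contraction does. -/
noncomputable def FlowCritical (A : Type*) [AddCommGroup A] : Prop :=
  G.Connected ∧ ¬ G.HasNZFlow A ∧ ∀ e : G.E, (G.contract {e}).HasNZFlow A

/-- The degree of a vertex (loops counted twice). -/
def degree (v : G.V) : ℕ :=
  (univ.filter fun e : G.E => G.tail e = v).card +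
    (univ.filter fun e : G.E => G.head e = v).card

/-- Incidence of a vertex and an edge. -/
def Incident (v : G.V) (e : G.E) : Prop := G.tail e = v ∨ G.head e = v

/-- The vector `δ_v ∈ (ℤ/3)^{E(G)}`, `δ_v(e) = [v,e]`. -/
def deltaV (v : G.V) : G.E → ZMod 3 := fun e => (G.sign v e : ZMod 3)

/-- The vector `δ_{v,e₁,e₂}`: `[v,e₁]` on `e₁`, `-[v,e₂]` on `e₂`, `0` elsewhere. -/
def deltaPair (v : G.V) (e₁ e₂ : G.E) : G.E → ZMod 3 := fun e =>
  if e = e₁ then (G.sign v e₁ : ZMod 3)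
  else if e = e₂ then -(G.sign v e₂ : ZMod 3) else 0

/-- The dot product on `(ℤ/3)^{E(G)}`. -/
def dot (c φ : G.E → ZMod 3) : ZMod 3 := ∑ e : G.E, c e * φ e

/-- The subspace `Δ_v`: the span of `δ_v` if `deg v ≠ 3`, and the span of `δ_v`
together with the vectors `δ_{v,e₁,e₂}` for incident edges if `deg v = 3`. -/
def DeltaSub (v : G.V) : Submodule (ZMod 3) (G.E → ZMod 3) :=
  if G.degree v = 3 then
    Submodule.span (ZMod 3) ({G.deltaV v} ∪
      {x | ∃ e₁ e₂ : G.E, e₁ ≠ e₂ ∧ G.Incident v e₁ ∧ G.Incident v e₂ ∧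
        x = G.deltaPair v e₁ e₂})
  else Submodule.span (ZMod 3) {G.deltaV v}

/-- Isomorphism of multigraphs (edges may be reversed, since the orientation
is an arbitrary fixed choice). -/
def Iso (G H : MultiGraph) : Prop :=
  ∃ (f : G.V ≃ H.V) (g : G.E ≃ H.E), ∀ e : G.E,
    (H.tail (g e) = f (G.tail e) ∧ H.head (g e) = f (G.head e)) ∨
    (H.tail (g e) = f (G.head e) ∧ H.head (g e) = f (G.tail e))

/-- The graph with two vertices joined by `m` parallel edges. -/
def banana (m : ℕ) : MultiGraph where
  V := Bool
  E := Fin m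
  tail := fun _ => false
  head := fun _ => true

/-- The wheel `W_k`: a cycle on `k` vertices plus a hub (`none`) adjacent to all
of them.  `Sum.inl` are the cycle edges, `Sum.inr` the spokes. -/
def wheel (k : ℕ) : MultiGraph where
  V := Option (Fin k)
  E := Fin k ⊕ Fin k
  tail := fun e => Sum.elim (fun i => some i) (fun i => some i) e
  head := fun e => Sum.elim (fun i => some (finRotate k i)) (fun _ => none) e

/-- `K₂`. -/
def K2 : MultiGraph := banana 1

/-- `K₄` (the wheel on `3 + 1` vertices). -/
def K4 : MultiGraph := wheel 3

/-- `G` is a wheel. -/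
def IsWheel : Prop := ∃ k : ℕ, 3 ≤ k ∧ Iso G (wheel k)

end MultiGraph
namespace MultiGraph

/-- The degree of `v` counted within a set `F` of edges (loops twice). -/
def degIn (G : MultiGraph) (F : Finset G.E) (v : G.V) : ℕ :=
  (F.filter fun e => G.tail e = v).card + (F.filter fun e => G.head e = v).card

end MultiGraph

open MultiGraph in
private lemma forest_card_aux (F : MultiGraph)
    (hforest : ∀ T : Finset F.E, T.Nonempty →
      (∀ e ∈ T, F.degree (F.tail e) = 3 ∧ F.degree (F.head e) = 3) →
      ∃ v : F.V, F.degree v = 3 ∧ F.degIn T v = 1) :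
    ∀ T : Finset F.E,
      (∀ e ∈ T, F.degree (F.tail e) = 3 ∧ F.degree (F.head e) = 3) →
      T.Nonempty →
      T.card < (Finset.univ.filter fun v => 0 < F.degIn T v).card := by
  intro T
  induction T using Finset.strongInduction with
  | _ T ih =>
    intro hT hne
    obtain ⟨v, hv3, hv1⟩ := hforest T hne hT
    have hab : (T.filter fun e => F.tail e = v).card
        + (T.filter fun e => F.head e = v).card = 1 := hv1
    -- find the unique edge incident to v
    have hinc : ∃ e0 ∈ T, (F.tail e0 = v ∨ F.head e0 = v) := by
      rcases Nat.eq_zero_or_pos (T.filter fun e => F.tail e = v).card with h | h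
      · have hb : (T.filter fun e => F.head e = v).card = 1 := by omega
        obtain ⟨e0, he0⟩ := Finset.card_pos.mp (by omega : 0 < (T.filter fun e => F.head e = v).card)
        exact ⟨e0, (Finset.mem_filter.mp he0).1, Or.inr (Finset.mem_filter.mp he0).2⟩
      · obtain ⟨e0, he0⟩ := Finset.card_pos.mp h
        exact ⟨e0, (Finset.mem_filter.mp he0).1, Or.inl (Finset.mem_filter.mp he0).2⟩
    obtain ⟨e0, he0T, he0inc⟩ := hinc
    -- uniqueness: any edge of T incident to v equals e0
    have huniq : ∀ e ∈ T, (F.tail e = v ∨ F.head e = v) → e = e0 := by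
      intro e heT hei
      by_contra hne'
      -- two distinct incident edges (or incidences) force degIn ≥ 2
      have : 2 ≤ (T.filter fun e => F.tail e = v).card
          + (T.filter fun e => F.head e = v).card := by
        rcases hei with h1 | h1 <;> rcases he0inc with h2 | h2
        · have : 2 ≤ (T.filter fun e => F.tail e = v).card := by
            refine Finset.one_lt_card.mpr ⟨e, ?_, e0, ?_, hne'⟩ <;>
              simp_all [Finset.mem_filter]
          omega
        · have h1' : 1 ≤ (T.filter fun e => F.tail e = v).card :=
            Finset.card_pos.mpr ⟨e, Finset.mem_filter.mpr ⟨heT, h1⟩⟩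
          have h2' : 1 ≤ (T.filter fun e => F.head e = v).card :=
            Finset.card_pos.mpr ⟨e0, Finset.mem_filter.mpr ⟨he0T, h2⟩⟩
          omega
        · have h1' : 1 ≤ (T.filter fun e => F.head e = v).card :=
            Finset.card_pos.mpr ⟨e, Finset.mem_filter.mpr ⟨heT, h1⟩⟩
          have h2' : 1 ≤ (T.filter fun e => F.tail e = v).card :=
            Finset.card_pos.mpr ⟨e0, Finset.mem_filter.mpr ⟨he0T, h2⟩⟩
          omega
        · have : 2 ≤ (T.filter fun e => F.head e = v).card := by
            refine Finset.one_lt_card.mpr ⟨e, ?_, e0, ?_, hne'⟩ <;>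
              simp_all [Finset.mem_filter]
          omega
      omega
    -- e0 is not a loop at v
    have hnoloop : ¬ (F.tail e0 = v ∧ F.head e0 = v) := by
      rintro ⟨h1, h2⟩
      have h1' : 1 ≤ (T.filter fun e => F.tail e = v).card :=
        Finset.card_pos.mpr ⟨e0, Finset.mem_filter.mpr ⟨he0T, h1⟩⟩
      have h2' : 1 ≤ (T.filter fun e => F.head e = v).card :=
        Finset.card_pos.mpr ⟨e0, Finset.mem_filter.mpr ⟨he0T, h2⟩⟩
      omega
    -- the other endpoint w of e0
    obtain ⟨w, hwv, hw1⟩ : ∃ w : F.V, w ≠ v ∧ 0 < F.degIn T w := by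
      rcases he0inc with h1 | h1
      · refine ⟨F.head e0, fun h => hnoloop ⟨h1, h⟩, ?_⟩
        have : e0 ∈ T.filter fun e => F.head e = F.head e0 :=
          Finset.mem_filter.mpr ⟨he0T, rfl⟩
        have := Finset.card_pos.mpr ⟨e0, this⟩
        unfold MultiGraph.degIn; omega
      · refine ⟨F.tail e0, fun h => hnoloop ⟨h, h1⟩, ?_⟩
        have : e0 ∈ T.filter fun e => F.tail e = F.tail e0 :=
          Finset.mem_filter.mpr ⟨he0T, rfl⟩
        have := Finset.card_pos.mpr ⟨e0, this⟩
        unfold MultiGraph.degIn; omega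
    have hvV : v ∈ Finset.univ.filter fun u => 0 < F.degIn T u :=
      Finset.mem_filter.mpr ⟨Finset.mem_univ _, by omega⟩
    have hwV : w ∈ Finset.univ.filter fun u => 0 < F.degIn T u :=
      Finset.mem_filter.mpr ⟨Finset.mem_univ _, hw1⟩
    -- degIn of the erased set at v is 0
    have herase0 : F.degIn (T.erase e0) v = 0 := by
      unfold MultiGraph.degIn
      have h1 : (T.erase e0).filter (fun e => F.tail e = v) = ∅ := by
        refine Finset.eq_empty_iff_forall_notMem.mpr fun e he => ?_
        obtain ⟨heE, htl⟩ := Finset.mem_filter.mp he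
        exact (Finset.mem_erase.mp heE).1
          (huniq e (Finset.mem_erase.mp heE).2 (Or.inl htl))
      have h2 : (T.erase e0).filter (fun e => F.head e = v) = ∅ := by
        refine Finset.eq_empty_iff_forall_notMem.mpr fun e he => ?_
        obtain ⟨heE, htl⟩ := Finset.mem_filter.mp he
        exact (Finset.mem_erase.mp heE).1
          (huniq e (Finset.mem_erase.mp heE).2 (Or.inr htl))
      rw [h1, h2]; simp
    rcases Finset.eq_empty_or_nonempty (T.erase e0) with hTe | hTe
    · -- T = {e0}
      have hT1 : T.card = 1 := by
        have := Finset.card_erase_add_one he0T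
        rw [hTe] at this
        simpa using this.symm
      rw [hT1]
      exact Finset.one_lt_card.mpr ⟨v, hvV, w, hwV, (Ne.symm hwv)⟩
    · have hsub : T.erase e0 ⊂ T := Finset.erase_ssubset he0T
      have hT' : ∀ e ∈ T.erase e0, F.degree (F.tail e) = 3 ∧ F.degree (F.head e) = 3 :=
        fun e he => hT e (Finset.mem_of_mem_erase he)
      have IH := ih (T.erase e0) hsub hT' hTe
      -- V(T.erase e0) ⊆ V(T) \ {v}
      have hVsub : (Finset.univ.filter fun u => 0 < F.degIn (T.erase e0) u)
          ⊆ (Finset.univ.filter fun u => 0 < F.degIn T u).erase v := by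
        intro u hu
        obtain ⟨-, hu'⟩ := Finset.mem_filter.mp hu
        refine Finset.mem_erase.mpr ⟨?_, ?_⟩
        · rintro rfl; rw [herase0] at hu'; exact absurd hu' (by simp)
        · refine Finset.mem_filter.mpr ⟨Finset.mem_univ _, ?_⟩
          have hmono : F.degIn (T.erase e0) u ≤ F.degIn T u := by
            unfold MultiGraph.degIn
            have := Finset.card_le_card
              (Finset.filter_subset_filter (fun e => F.tail e = u) (Finset.erase_subset e0 T))
            have := Finset.card_le_card
              (Finset.filter_subset_filter (fun e => F.head e = u) (Finset.erase_subset e0 T))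
            omega
          omega
      have hVcard := Finset.card_le_card hVsub
      have hVe := Finset.card_erase_of_mem hvV
      have hTc := Finset.card_erase_add_one he0T
      have hpos : 0 < (Finset.univ.filter fun u => 0 < F.degIn T u).card :=
        Finset.card_pos.mpr ⟨v, hvV⟩
      omega

open MultiGraph in
/-- If an `n`-vertex `ℤ/3`-flow-critical graph `F ≠ K₂` has minimum degree at
least three and its set `S` of degree-3 vertices induces a forest (every
nonempty set of edges with both endpoints in `S` has a vertex incident to
exactly one of them), then `|E(F)| ≥ (8n+1)/5`. -/
theorem edges_ge_eight_fifths (F : MultiGraph)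
    (hF : F.FlowCritical (ZMod 3)) (hK2 : ¬ Iso F K2)
    (hmin : ∀ v : F.V, 3 ≤ F.degree v)
    (hforest : ∀ T : Finset F.E, T.Nonempty →
      (∀ e ∈ T, F.degree (F.tail e) = 3 ∧ F.degree (F.head e) = 3) →
      ∃ v : F.V, F.degree v = 3 ∧ F.degIn T v = 1) :
    5 * Fintype.card F.E ≥ 8 * Fintype.card F.V + 1 := by
  classical
  have hn : 1 ≤ Fintype.card F.V := Fintype.card_pos_iff.mpr hF.1.1
  set S : Finset F.V := Finset.univ.filter fun v => F.degree v = 3 with hS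
  set ES : Finset F.E := Finset.univ.filter
    (fun e => F.degree (F.tail e) = 3 ∧ F.degree (F.head e) = 3) with hES
  -- handshake: sum of all degrees is 2|E|
  have hsumtail : ∑ v : F.V, (Finset.univ.filter fun e : F.E => F.tail e = v).card
      = Fintype.card F.E := by
    rw [← Finset.card_univ, Finset.card_eq_sum_card_fiberwise
      (fun e _ => Finset.mem_univ (F.tail e))]
  have hsumhead : ∑ v : F.V, (Finset.univ.filter fun e : F.E => F.head e = v).card
      = Fintype.card F.E := by
    rw [← Finset.card_univ, Finset.card_eq_sum_card_fiberwise
      (fun e _ => Finset.mem_univ (F.head e))]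
  have hhandshake : ∑ v : F.V, F.degree v = 2 * Fintype.card F.E := by
    unfold MultiGraph.degree
    rw [Finset.sum_add_distrib, hsumtail, hsumhead]; ring
  -- degree lower bound: 4n - |S| ≤ 2|E|
  have hdeg : 4 * Fintype.card F.V ≤ 2 * Fintype.card F.E + S.card := by
    have h1 : ∀ v : F.V, 4 ≤ F.degree v + (if v ∈ S then 1 else 0) := by
      intro v
      by_cases hv : v ∈ S
      · simp only [hv, if_true]
        have : F.degree v = 3 := (Finset.mem_filter.mp hv).2
        omega
      · simp only [hv, if_false]
        have h3 := hmin v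
        have : F.degree v ≠ 3 := fun h => hv (Finset.mem_filter.mpr ⟨Finset.mem_univ _, h⟩)
        omega
    calc 4 * Fintype.card F.V = ∑ _v : F.V, 4 := by
          simp [Finset.sum_const, Finset.card_univ, Nat.mul_comm]
      _ ≤ ∑ v : F.V, (F.degree v + (if v ∈ S then 1 else 0)) :=
          Finset.sum_le_sum fun v _ => h1 v
      _ = 2 * Fintype.card F.E + S.card := by
          rw [Finset.sum_add_distrib, hhandshake]
          congr 1
          rw [Finset.sum_ite_mem, Finset.univ_inter, Finset.sum_const,
            smul_eq_mul, Nat.mul_one]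
  -- double counting: 3|S| ≤ |E| + |ES|
  have hcount : 3 * S.card ≤ Fintype.card F.E + ES.card := by
    have hSdeg : ∑ v ∈ S, F.degree v = 3 * S.card := by
      rw [Finset.sum_congr rfl (fun v hv => (Finset.mem_filter.mp hv).2)]
      simp [Nat.mul_comm, hS]
    have htail : ∑ v ∈ S, (Finset.univ.filter fun e : F.E => F.tail e = v).card
        = ∑ e : F.E, (if F.tail e ∈ S then 1 else 0) := by
      simp_rw [Finset.card_filter]
      rw [Finset.sum_comm]
      refine Finset.sum_congr rfl fun e _ => ?_
      simp [Finset.sum_ite_eq S (F.tail e) (fun _ => 1), eq_comm]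
    have hhead : ∑ v ∈ S, (Finset.univ.filter fun e : F.E => F.head e = v).card
        = ∑ e : F.E, (if F.head e ∈ S then 1 else 0) := by
      simp_rw [Finset.card_filter]
      rw [Finset.sum_comm]
      refine Finset.sum_congr rfl fun e _ => ?_
      simp [Finset.sum_ite_eq S (F.head e) (fun _ => 1), eq_comm]
    have hper : ∀ e : F.E,
        (if F.tail e ∈ S then 1 else 0) + (if F.head e ∈ S then 1 else 0)
          ≤ 1 + (if e ∈ ES then 1 else 0) := by
      intro e
      by_cases h1 : F.tail e ∈ S <;> by_cases h2 : F.head e ∈ S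
      · have : e ∈ ES := Finset.mem_filter.mpr ⟨Finset.mem_univ _,
          (Finset.mem_filter.mp h1).2, (Finset.mem_filter.mp h2).2⟩
        simp [h1, h2, this]
      all_goals simp [h1, h2]
    calc 3 * S.card = ∑ v ∈ S, F.degree v := hSdeg.symm
      _ = ∑ e : F.E, ((if F.tail e ∈ S then 1 else 0) + (if F.head e ∈ S then 1 else 0)) := by
          unfold MultiGraph.degree
          rw [Finset.sum_add_distrib, htail, hhead, ← Finset.sum_add_distrib]
      _ ≤ ∑ e : F.E, (1 + (if e ∈ ES then 1 else 0)) :=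
          Finset.sum_le_sum fun e _ => hper e
      _ = Fintype.card F.E + ES.card := by
          rw [Finset.sum_add_distrib, Finset.sum_ite_mem, Finset.univ_inter,
            Finset.sum_const, Finset.sum_const, smul_eq_mul, smul_eq_mul,
            Nat.mul_one, Nat.mul_one, Finset.card_univ]
  -- case on S empty or not
  by_cases hSne : S.Nonempty
  · -- forest bound: |ES| < |S|
    have hforestbound : ES.card < S.card := by
      rcases Finset.eq_empty_or_nonempty ES with hESe | hESne
      · rw [hESe]; simpa using Finset.card_pos.mpr hSne
      · have hESend : ∀ e ∈ ES, F.degree (F.tail e) = 3 ∧ F.degree (F.head e) = 3 :=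
          fun e he => (Finset.mem_filter.mp he).2
        have hkey := forest_card_aux F hforest ES hESend hESne
        have hsub : (Finset.univ.filter fun v => 0 < F.degIn ES v) ⊆ S := by
          intro v hv
          obtain ⟨-, hv'⟩ := Finset.mem_filter.mp hv
          unfold MultiGraph.degIn at hv'
          refine Finset.mem_filter.mpr ⟨Finset.mem_univ _, ?_⟩
          rcases Nat.eq_zero_or_pos (ES.filter fun e => F.tail e = v).card with h | h
          · obtain ⟨e, he⟩ := Finset.card_pos.mp (by omega :
              0 < (ES.filter fun e => F.head e = v).card)
            obtain ⟨heES, hev⟩ := Finset.mem_filter.mp he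
            rw [← hev]; exact (hESend e heES).2
          · obtain ⟨e, he⟩ := Finset.card_pos.mp h
            obtain ⟨heES, hev⟩ := Finset.mem_filter.mp he
            rw [← hev]; exact (hESend e heES).1
        exact lt_of_lt_of_le hkey (Finset.card_le_card hsub)
    omega
  · have hS0 : S.card = 0 := by
      rw [Finset.card_eq_zero]
      exact Finset.not_nonempty_iff_eq_empty.mp hSne
    omega
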